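/- arXiv:1003.5826 — 2 statements merged into one kernel-verified Lean document; each statement's English description precedes it below -/
import Mathlib

section
/- Let L : ℝⁿ × ℝⁿ → ℝ be C¹ (autonomous Lagrangian) and let q : [a,b] → ℝⁿ be a C¹ local minimizer of I[q] = ∫_a^b L(q(t), q'(t)) dt among C¹ curves with fixed endpoints, such that t ↦ ∂₂L(q(t), q'(t)) is differentiable. Then the second Erdmann condition holds: the function t ↦ -L(q(t), q'(t)) + ∂₂L(q(t), q'(t)) · q'(t) is constant on [a,b]. -/
open Set intervalIntegral
open scoped RealInnerProductSpace

set_option maxHeartbeats 1000000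

lemma second_erdmann_reparam {a b M ε : ℝ} (hab : a < b) {η : ℝ → ℝ} (hηc : Continuous η)
    (hM : ∀ s, |η s| ≤ M) (hη0 : (∫ s in a..b, η s) = 0) (hε : |ε| * M ≤ 1/3) :
    ∃ σ : ℝ → ℝ, Continuous σ ∧ σ a = a ∧ σ b = b ∧ Monotone σ ∧
      (∀ t, HasDerivAt σ ((1 + ε * η (σ t))⁻¹) t) ∧
      (∀ t ∈ Icc a b, |σ t - t| ≤ |ε| * (M * (b - a))) ∧
      (∀ g : ℝ → ℝ, Continuous g →
        (∫ t in a..b, g (σ t)) = ∫ s in a..b, (1 + ε * η s) * g s) := by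
  have hM0 : 0 ≤ M := le_trans (abs_nonneg _) (hM 0)
  set v : ℝ → ℝ := fun s => 1 + ε * η s with hvdef
  have hvlb : ∀ s, 2/3 ≤ v s := by
    intro s
    have h1 : |ε * η s| ≤ 1/3 := by
      rw [abs_mul]
      calc |ε| * |η s| ≤ |ε| * M := by
            exact mul_le_mul_of_nonneg_left (hM s) (abs_nonneg _)
        _ ≤ 1/3 := hε
    have := abs_le.1 h1
    simp only [hvdef]; linarith [this.1]
  have hvpos : ∀ s, 0 < v s := fun s => lt_of_lt_of_le (by norm_num) (hvlb s)
  have hvc : Continuous v := continuous_const.add (continuous_const.mul hηc)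
  set H : ℝ → ℝ := fun s => ∫ x in a..s, η x with hHdef
  have hHd : ∀ s, HasDerivAt H (η s) s := fun s =>
    intervalIntegral.integral_hasDerivAt_right (hηc.intervalIntegrable _ _)
      (hηc.stronglyMeasurable.stronglyMeasurableAtFilter) hηc.continuousAt
  set ρ : ℝ → ℝ := fun s => s + ε * H s with hρdef
  have hρd : ∀ s, HasDerivAt ρ (v s) s := by
    intro s
    have := (hasDerivAt_id s).add ((hHd s).const_mul ε)
    exact this
  have hρdiff : Differentiable ℝ ρ := fun s => (hρd s).differentiableAt
  have hρmono : StrictMono ρ := by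
    apply strictMono_of_deriv_pos
    intro s; rw [(hρd s).deriv]; exact hvpos s
  have hHb : ∀ s, |H s| ≤ M * |s - a| := by
    intro s
    simpa [hHdef, Real.norm_eq_abs] using
      intervalIntegral.norm_integral_le_of_norm_le_const
        (f := η) (C := M) (a := a) (b := s) (fun x _ => by simpa [Real.norm_eq_abs] using hM x)
  have hρlow : ∀ s, a ≤ s → (s + a) / 2 ≤ ρ s := by
    intro s hs
    have h1 : |ε * H s| ≤ (s - a) / 2 := by
      rw [abs_mul]
      calc |ε| * |H s| ≤ |ε| * (M * |s - a|) :=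
            mul_le_mul_of_nonneg_left (hHb s) (abs_nonneg _)
        _ = |ε| * M * |s - a| := by ring
        _ ≤ (1/2) * |s - a| := by
            apply mul_le_mul_of_nonneg_right _ (abs_nonneg _)
            linarith
        _ = (s - a) / 2 := by rw [abs_of_nonneg (by linarith)]; ring
    have := (abs_le.1 h1).1
    simp only [hρdef]; linarith
  have hρhigh : ∀ s, s ≤ a → ρ s ≤ (s + a) / 2 := by
    intro s hs
    have h1 : |ε * H s| ≤ (a - s) / 2 := by
      rw [abs_mul]
      calc |ε| * |H s| ≤ |ε| * (M * |s - a|) :=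
            mul_le_mul_of_nonneg_left (hHb s) (abs_nonneg _)
        _ = |ε| * M * |s - a| := by ring
        _ ≤ (1/2) * |s - a| := by
            apply mul_le_mul_of_nonneg_right _ (abs_nonneg _)
            linarith
        _ = (a - s) / 2 := by rw [abs_of_nonpos (by linarith)]; ring
    have := (abs_le.1 h1).2
    simp only [hρdef]; linarith
  have htop : Filter.Tendsto ρ Filter.atTop Filter.atTop := by
    apply Filter.tendsto_atTop_mono' _ _
      (Filter.Tendsto.atTop_div_const (by norm_num : (0:ℝ) < 2)
        (Filter.tendsto_atTop_add_const_right _ a Filter.tendsto_id))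
    filter_upwards [Filter.eventually_ge_atTop a] with s hs
    exact hρlow s hs
  have hbot : Filter.Tendsto ρ Filter.atBot Filter.atBot := by
    apply Filter.tendsto_atBot_mono' _ _
      (Filter.Tendsto.atBot_div_const (by norm_num : (0:ℝ) < 2)
        (Filter.tendsto_atBot_add_const_right _ a Filter.tendsto_id))
    filter_upwards [Filter.eventually_le_atBot a] with s hs
    exact hρhigh s hs
  have hρsurj : Function.Surjective ρ := hρdiff.continuous.surjective htop hbot
  set oi := StrictMono.orderIsoOfSurjective ρ hρmono hρsurj with hoi
  set σ : ℝ → ℝ := fun t => oi.symm t with hσdef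
  have hσρ : ∀ s, σ (ρ s) = s := fun s => oi.symm_apply_apply s
  have hρσ : ∀ t, ρ (σ t) = t := fun t => oi.apply_symm_apply t
  have hσc : Continuous σ := OrderIso.continuous oi.symm
  have hσmono : Monotone σ := (oi.symm).monotone
  have hρa : ρ a = a := by simp [hρdef, hHdef]
  have hρb : ρ b = b := by simp [hρdef, hHdef, hη0]
  have hσa : σ a = a := by have := hσρ a; rw [hρa] at this; exact this
  have hσb : σ b = b := by have := hσρ b; rw [hρb] at this; exact this
  have hσd : ∀ t, HasDerivAt σ ((v (σ t))⁻¹) t := by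
    intro t
    exact HasDerivAt.of_local_left_inverse hσc.continuousAt (hρd (σ t))
      (ne_of_gt (hvpos _)) (Filter.Eventually.of_forall hρσ)
  refine ⟨σ, hσc, hσa, hσb, hσmono, hσd, ?_, ?_⟩
  · intro t ht
    have hσt : σ t ∈ Icc a b := by
      constructor
      · rw [← hσa]; exact hσmono ht.1
      · rw [← hσb]; exact hσmono ht.2
    have h1 : σ t - t = -(ε * H (σ t)) := by
      have := hρσ t
      simp only [hρdef] at this
      linarith
    rw [h1, abs_neg, abs_mul]
    calc |ε| * |H (σ t)| ≤ |ε| * (M * |σ t - a|) :=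
          mul_le_mul_of_nonneg_left (hHb _) (abs_nonneg _)
      _ ≤ |ε| * (M * (b - a)) := by
          apply mul_le_mul_of_nonneg_left _ (abs_nonneg _)
          apply mul_le_mul_of_nonneg_left _ hM0
          rw [abs_of_nonneg (by linarith [hσt.1])]
          linarith [hσt.2]
  · intro g hg
    have hcv := intervalIntegral.integral_comp_smul_deriv (f := ρ) (f' := v)
      (g := g ∘ σ) (a := a) (b := b) (fun x _ => hρd x) hvc.continuousOn (hg.comp hσc)
    rw [hρa, hρb] at hcv
    rw [show (∫ t in a..b, g (σ t)) = ∫ x in a..b, (g ∘ σ) x from rfl, ← hcv]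
    apply intervalIntegral.integral_congr
    intro s _
    simp only [Function.comp_apply, hσρ s, smul_eq_mul, hvdef]


theorem second_erdmann_real (n : ℕ) (a b : ℝ) (hab : a < b)
    (L : EuclideanSpace ℝ (Fin n) → EuclideanSpace ℝ (Fin n) → ℝ)
    (L1 L2 : EuclideanSpace ℝ (Fin n) → EuclideanSpace ℝ (Fin n) → EuclideanSpace ℝ (Fin n))
    (hL : ContDiff ℝ 1 (fun p : EuclideanSpace ℝ (Fin n) × EuclideanSpace ℝ (Fin n) =>
      L p.1 p.2))
    (hL1 : ∀ u v, HasGradientAt (fun u' => L u' v) (L1 u v) u)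
    (hL2 : ∀ u v, HasGradientAt (fun v' => L u v') (L2 u v) v)
    (q : ℝ → EuclideanSpace ℝ (Fin n)) (hq : ContDiff ℝ 1 q)
    (hmin : ∃ δ > 0, ∀ p : ℝ → EuclideanSpace ℝ (Fin n), ContDiff ℝ 1 p →
      p a = q a → p b = q b →
      (∀ t ∈ Icc a b, ‖p t - q t‖ + ‖deriv p t - deriv q t‖ < δ) →
      ∫ t in a..b, L (q t) (deriv q t) ≤ ∫ t in a..b, L (p t) (deriv p t))
    (hd2 : ∀ t ∈ Ioo a b, DifferentiableAt ℝ (fun s => L2 (q s) (deriv q s)) t) :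
    ∀ s ∈ Icc a b, ∀ t ∈ Icc a b,
      -L (q s) (deriv q s) + ⟪L2 (q s) (deriv q s), deriv q s⟫
        = -L (q t) (deriv q t) + ⟪L2 (q t) (deriv q t), deriv q t⟫ := by
  obtain ⟨δ, hδ, hmin⟩ := hmin
  have hqd : Differentiable ℝ q := hq.differentiable one_ne_zero
  have hq'c : Continuous (deriv q) := hq.continuous_deriv le_rfl
  have hqc : Continuous q := hq.continuous
  set Lp : (EuclideanSpace ℝ (Fin n) × EuclideanSpace ℝ (Fin n)) → ℝ :=
    fun p => L p.1 p.2 with hLpdef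
  set D := fderiv ℝ Lp with hDdef
  have hLpd : ∀ p, HasFDerivAt Lp (D p) p := fun p =>
    ((hL.differentiable one_ne_zero) p).hasFDerivAt
  have hDc : Continuous D := hL.continuous_fderiv one_ne_zero
  have key2 : ∀ u v w, (D (u, v)) (0, w) = ⟪L2 u v, w⟫ := by
    intro u v w
    have h1 : HasFDerivAt (fun v' => L u v')
        ((D (u, v)).comp ((0 : _ →L[ℝ] _).prod (ContinuousLinearMap.id ℝ _))) v :=
      (hLpd (u, v)).comp v ((hasFDerivAt_const u v).prodMk (hasFDerivAt_id v))
    have h2 : HasFDerivAt (fun v' => L u v') (InnerProductSpace.toDual ℝ _ (L2 u v)) v :=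
      (hL2 u v).hasFDerivAt
    have h3 := h2.unique h1
    have h4 := congrArg (fun (T : EuclideanSpace ℝ (Fin n) →L[ℝ] ℝ) => T w) h3
    simpa [InnerProductSpace.toDual_apply_apply] using h4.symm
  set En : ℝ → ℝ := fun s =>
    -L (q s) (deriv q s) + ⟪L2 (q s) (deriv q s), deriv q s⟫ with hEndef
  have hrepr : ∀ s, En s = -Lp (q s, deriv q s) + (D (q s, deriv q s)) (0, deriv q s) :=
    fun s => by rw [hEndef]; simp only [hLpdef]; rw [key2]
  have hEnc : Continuous En := by
    rw [show En = fun s => -Lp (q s, deriv q s) + (D (q s, deriv q s)) (0, deriv q s)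
      from funext hrepr]
    exact ((hL.continuous.comp (hqc.prodMk hq'c)).neg).add
      ((hDc.comp (hqc.prodMk hq'c)).clm_apply (continuous_const.prodMk hq'c))
  set c : ℝ := (∫ x in a..b, En x) / (b - a) with hcdef
  suffices hconst : ∀ u ∈ Icc a b, En u = c by
    intro s hs t ht
    show En s = En t
    rw [hconst s hs, hconst t ht]
  set η : ℝ → ℝ := fun s => En (max a (min s b)) - c with hηdef
  have hηc : Continuous η :=
    (hEnc.comp (continuous_const.max (continuous_id.min continuous_const))).sub
      continuous_const
  have hclamp : ∀ s, max a (min s b) ∈ Icc a b := by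
    intro s
    constructor
    · exact le_max_left _ _
    · exact max_le hab.le (min_le_right _ _)
  have hηeq : ∀ s ∈ Icc a b, η s = En s - c := by
    intro s hs
    have h : a ⊔ s ⊓ b = s := by rw [min_eq_left hs.2, max_eq_right hs.1]
    simp only [hηdef, h]
  obtain ⟨M0, hM0⟩ := (isCompact_Icc (a := a) (b := b)).exists_bound_of_continuousOn
    hEnc.continuousOn
  have hM00 : 0 ≤ M0 := le_trans (norm_nonneg _) (hM0 a ⟨le_rfl, hab.le⟩)
  set M : ℝ := M0 + |c| + 1 with hMdef
  have hMpos : 0 < M := by positivity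
  have hM : ∀ s, |η s| ≤ M := by
    intro s
    rw [hηdef]
    calc |En (max a (min s b)) - c| ≤ |En (max a (min s b))| + |c| := abs_sub _ _
      _ ≤ M0 + |c| := by
          have := hM0 _ (hclamp s)
          rw [Real.norm_eq_abs] at this
          linarith
      _ ≤ M := by rw [hMdef]; linarith
  have hEnInt : IntervalIntegrable En MeasureTheory.volume a b := hEnc.intervalIntegrable _ _
  have hInc : (∫ s in a..b, (En s - c)) = 0 := by
    rw [intervalIntegral.integral_sub hEnInt (intervalIntegrable_const),
      intervalIntegral.integral_const, smul_eq_mul, hcdef,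
      mul_div_cancel₀ _ (sub_ne_zero.mpr hab.ne')]
    ring
  have hη0 : (∫ s in a..b, η s) = 0 := by
    rw [← hInc]
    apply intervalIntegral.integral_congr
    intro s hs
    exact hηeq s (by rwa [uIcc_of_le hab.le] at hs)

  have hkey : (∫ s in a..b, η s * En s) = 0 := by
    set F : ℝ → ℝ → ℝ := fun e s =>
      (1 + e * η s) * L (q s) ((1 + e * η s)⁻¹ • deriv q s) with hFdef
    set F' : ℝ → ℝ → ℝ := fun e s =>
      η s * Lp (q s, (1 + e * η s)⁻¹ • deriv q s)
        + (1 + e * η s) *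
          (D (q s, (1 + e * η s)⁻¹ • deriv q s))
            (0, (-(η s) / (1 + e * η s) ^ 2) • deriv q s) with hF'def
    have hFd : ∀ (s e : ℝ), 1 + e * η s ≠ 0 → HasDerivAt (fun x => F x s) (F' e s) e := by
      intro s e hne
      have hc : HasDerivAt (fun x : ℝ => 1 + x * η s) (η s) e := by
        simpa using (hasDerivAt_mul_const (η s)).const_add 1
      have hcinv := hc.inv hne
      have hsmul := hcinv.smul_const (deriv q s)
      have hpair := (hasDerivAt_const e (q s)).prodMk hsmul
      have hcomp := (hLpd ((q s), (1 + e * η s)⁻¹ • deriv q s)).comp_hasDerivAt e hpair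
      exact hc.mul hcomp
    set r : ℝ := (6 * M)⁻¹ with hrdef
    have hr : 0 < r := by rw [hrdef]; positivity
    have hrM : r * M = 1 / 6 := by
      rw [hrdef]; field_simp
    have hvlb : ∀ e s, |e| ≤ r → (5 : ℝ) / 6 ≤ 1 + e * η s := by
      intro e s he
      have h1 : |e * η s| ≤ 1 / 6 := by
        rw [abs_mul]
        calc |e| * |η s| ≤ |e| * M := mul_le_mul_of_nonneg_left (hM s) (abs_nonneg _)
          _ ≤ r * M := mul_le_mul_of_nonneg_right he hMpos.le
          _ = 1 / 6 := hrM
      have h2 := (abs_le.1 h1).1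
      linarith
    have hvpos : ∀ e s, |e| ≤ r → (0 : ℝ) < 1 + e * η s := by
      intro e s he
      exact lt_of_lt_of_le (by norm_num) (hvlb e s he)
    -- local minimality of the inner-variation functional
    have hlm : IsLocalMin (fun e => ∫ s in a..b, F e s) 0 := by
      obtain ⟨K0, hK0⟩ := (isCompact_Icc (a := a) (b := b)).exists_bound_of_continuousOn
        hq'c.continuousOn
      set K : ℝ := K0 + 1 with hKdef
      have hK00 : 0 ≤ K0 := le_trans (norm_nonneg _) (hK0 a ⟨le_rfl, hab.le⟩)
      have hKpos : 0 < K := by rw [hKdef]; linarith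
      have hK : ∀ x ∈ Icc a b, ‖deriv q x‖ ≤ K := fun x hx => by
        have := hK0 x hx; rw [hKdef]; linarith
      have hqlip : ∀ x ∈ Icc a b, ∀ y ∈ Icc a b, ‖q y - q x‖ ≤ K * ‖y - x‖ := by
        intro x hx y hy
        exact (convex_Icc a b).norm_image_sub_le_of_norm_hasDerivWithin_le
          (fun z hz => (hqd z).hasDerivAt.hasDerivWithinAt) hK hx hy
      have huc := (isCompact_Icc (a := a) (b := b)).uniformContinuousOn_of_continuous
        hq'c.continuousOn
      obtain ⟨ζ, hζ, hζ'⟩ := Metric.uniformContinuousOn_iff.1 huc (δ / 4) (by linarith)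
      set A : ℝ := M * (b - a) with hAdef
      have hA0 : 0 ≤ A := by rw [hAdef]; exact mul_nonneg hMpos.le (by linarith)
      set B : ℝ := K * A + 2 * M * K with hBdef
      have hB0 : 0 ≤ B := by rw [hBdef]; positivity
      set r' : ℝ := min r (min (ζ / (A + 1)) (δ / (2 * (B + 1)))) with hr'def
      have hr' : 0 < r' := by
        rw [hr'def]
        refine lt_min hr (lt_min (div_pos hζ (by linarith)) (div_pos hδ (by linarith)))
      show ∀ᶠ e in nhds (0 : ℝ), (∫ s in a..b, F 0 s) ≤ ∫ s in a..b, F e s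
      rw [Metric.eventually_nhds_iff]
      refine ⟨r', hr', ?_⟩
      intro e he
      rw [Real.dist_eq, sub_zero] at he
      have her : |e| ≤ r := le_of_lt (lt_of_lt_of_le he (by rw [hr'def]; exact min_le_left _ _))
      have heζ : |e| < ζ / (A + 1) :=
        lt_of_lt_of_le he (by rw [hr'def]; exact le_trans (min_le_right _ _) (min_le_left _ _))
      have heB : |e| < δ / (2 * (B + 1)) :=
        lt_of_lt_of_le he (by rw [hr'def]; exact le_trans (min_le_right _ _) (min_le_right _ _))
      have hεM : |e| * M ≤ 1 / 3 := by
        calc |e| * M ≤ r * M := mul_le_mul_of_nonneg_right her hMpos.le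
          _ = 1 / 6 := hrM
          _ ≤ 1 / 3 := by norm_num
      obtain ⟨σ, hσc, hσa, hσb, hσmono, hσd, hσbd, hσint⟩ :=
        second_erdmann_reparam hab hηc hM hη0 hεM
      have hvσ : ∀ t, (5 : ℝ) / 6 ≤ 1 + e * η (σ t) := fun t => hvlb e (σ t) her
      have hvσ0 : ∀ t, (0 : ℝ) < 1 + e * η (σ t) :=
        fun t => lt_of_lt_of_le (by norm_num) (hvσ t)
      set p : ℝ → EuclideanSpace ℝ (Fin n) := fun t => q (σ t) with hpdef
      have hpd : ∀ t, HasDerivAt p ((1 + e * η (σ t))⁻¹ • deriv q (σ t)) t := by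
        intro t
        exact HasDerivAt.scomp (h := σ) (x := t) ((hqd (σ t)).hasDerivAt) (hσd t)
      have hpderiv : ∀ t, deriv p t = (1 + e * η (σ t))⁻¹ • deriv q (σ t) :=
        fun t => (hpd t).deriv
      have hpc1 : ContDiff ℝ 1 p := by
        rw [contDiff_one_iff_deriv]
        refine ⟨fun t => (hpd t).differentiableAt, ?_⟩
        rw [show deriv p = fun t => (1 + e * η (σ t))⁻¹ • deriv q (σ t) from funext hpderiv]
        exact ((continuous_const.add (continuous_const.mul (hηc.comp hσc))).inv₀
          (fun t => ne_of_gt (hvσ0 t))).smul (hq'c.comp hσc)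
      have hpa : p a = q a := by rw [hpdef]; simp only; rw [hσa]
      have hpb : p b = q b := by rw [hpdef]; simp only; rw [hσb]
      have htube : ∀ t ∈ Icc a b, ‖p t - q t‖ + ‖deriv p t - deriv q t‖ < δ := by
        intro t ht
        have hσt : σ t ∈ Icc a b := ⟨hσa ▸ hσmono ht.1, hσb ▸ hσmono ht.2⟩
        have hd1 : |σ t - t| ≤ |e| * (M * (b - a)) := hσbd t ht
        have hd1A : |σ t - t| ≤ |e| * A := by rw [hAdef]; exact hd1
        have hd1' : |σ t - t| < ζ := by
          have h2 : |e| * A ≤ (ζ / (A + 1)) * A :=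
            mul_le_mul heζ.le le_rfl hA0 (div_nonneg hζ.le (by linarith))
          have h3 : (ζ / (A + 1)) * A < ζ := by
            rw [div_mul_eq_mul_div, div_lt_iff₀ (by positivity : (0:ℝ) < A + 1)]
            have h4 := mul_lt_mul_of_pos_left (lt_add_one A) hζ
            linarith
          linarith [hd1A, h2, h3]
        have hq1 : ‖p t - q t‖ ≤ K * (|e| * A) := by
          calc ‖p t - q t‖ = ‖q (σ t) - q t‖ := rfl
            _ ≤ K * ‖σ t - t‖ := hqlip t ht (σ t) hσt
            _ = K * |σ t - t| := by rw [Real.norm_eq_abs]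
            _ ≤ K * (|e| * A) := by
                exact mul_le_mul_of_nonneg_left hd1A hKpos.le
        have hsplit : deriv p t - deriv q t
            = ((1 + e * η (σ t))⁻¹ - 1) • deriv q (σ t) + (deriv q (σ t) - deriv q t) := by
          rw [hpderiv t, sub_smul, one_smul]; abel
        have hinv1 : |(1 + e * η (σ t))⁻¹ - 1| ≤ 2 * (M * |e|) := by
          have hv0 := hvσ0 t
          have hv56 := hvσ t
          have heq : (1 + e * η (σ t))⁻¹ - 1 = (-(e * η (σ t))) / (1 + e * η (σ t)) := by
            field_simp; ring
          rw [heq, abs_div, abs_neg, abs_of_pos hv0]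
          have hnum : |e * η (σ t)| ≤ M * |e| := by
            rw [abs_mul]
            calc |e| * |η (σ t)| ≤ |e| * M := mul_le_mul_of_nonneg_left (hM _) (abs_nonneg _)
              _ = M * |e| := mul_comm _ _
          have hX : (0:ℝ) ≤ M * |e| := by positivity
          calc |e * η (σ t)| / (1 + e * η (σ t)) ≤ (M * |e|) / (5 / 6) :=
                div_le_div₀ hX hnum (by norm_num) hv56
            _ = (6 / 5) * (M * |e|) := by ring
            _ ≤ 2 * (M * |e|) := mul_le_mul_of_nonneg_right (by norm_num : (6/5:ℝ) ≤ 2) hX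
        have hq2 : ‖deriv p t - deriv q t‖
            ≤ 2 * (M * |e|) * K + ‖deriv q (σ t) - deriv q t‖ := by
          rw [hsplit]
          refine le_trans (norm_add_le _ _) ?_
          have : ‖((1 + e * η (σ t))⁻¹ - 1) • deriv q (σ t)‖ ≤ 2 * (M * |e|) * K := by
            rw [norm_smul, Real.norm_eq_abs]
            exact mul_le_mul hinv1 (hK _ hσt) (norm_nonneg _) (by positivity)
          linarith
        have hq3 : ‖deriv q (σ t) - deriv q t‖ < δ / 4 := by
          have := hζ' (σ t) hσt t ht (by rw [Real.dist_eq]; exact hd1')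
          rwa [dist_eq_norm] at this
        have hBe : B * |e| < δ / 2 := by
          have h4 : B * |e| ≤ B * (δ / (2 * (B + 1))) :=
            mul_le_mul_of_nonneg_left heB.le hB0
          have h5 : B * (δ / (2 * (B + 1))) < δ / 2 := by
            rw [show B * (δ / (2 * (B + 1))) = (B * δ) / (2 * (B + 1)) by ring,
              div_lt_div_iff₀ (by positivity : (0:ℝ) < 2 * (B + 1)) (by norm_num : (0:ℝ) < 2)]
            nlinarith
          linarith
        have hexp : K * (|e| * A) + 2 * (M * |e|) * K = B * |e| := by
          rw [hBdef]; ring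
        calc ‖p t - q t‖ + ‖deriv p t - deriv q t‖
            ≤ K * (|e| * A) + (2 * (M * |e|) * K + ‖deriv q (σ t) - deriv q t‖) := by
              linarith
          _ < K * (|e| * A) + 2 * (M * |e|) * K + δ / 4 := by linarith
          _ = B * |e| + δ / 4 := by rw [← hexp]
          _ < δ / 2 + δ / 4 := by linarith
          _ < δ := by linarith
      have hI := hmin p hpc1 hpa hpb htube
      have hGc : Continuous (fun s => L (q s) ((1 + e * η s)⁻¹ • deriv q s)) := by
        exact hL.continuous.comp (hqc.prodMk
          (((continuous_const.add (continuous_const.mul hηc)).inv₀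
            (fun s => ne_of_gt (hvpos e s her))).smul hq'c))
      have hid := hσint _ hGc
      have hFe : (∫ s in a..b, F e s) = ∫ t in a..b, L (p t) (deriv p t) := by
        rw [show (∫ s in a..b, F e s)
            = ∫ s in a..b, (1 + e * η s) * L (q s) ((1 + e * η s)⁻¹ • deriv q s) from rfl,
          ← hid]
        apply intervalIntegral.integral_congr
        intro t _
        show L (q (σ t)) ((1 + e * η (σ t))⁻¹ • deriv q (σ t)) = L (p t) (deriv p t)
        rw [hpderiv t]
      have hF0 : (∫ s in a..b, F 0 s) = ∫ t in a..b, L (q t) (deriv q t) := by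
        apply intervalIntegral.integral_congr
        intro s _
        show F 0 s = L (q s) (deriv q s)
        rw [hFdef]; simp
      rw [hF0, hFe]
      exact hI
    -- differentiability of the functional at 0
    have hFcont : ∀ x : ℝ, |x| ≤ r → Continuous (fun s => F x s) := by
      intro x hx
      rw [hFdef]
      exact (continuous_const.add (continuous_const.mul hηc)).mul
        (hL.continuous.comp (hqc.prodMk
          (((continuous_const.add (continuous_const.mul hηc)).inv₀
            (fun s => ne_of_gt (hvpos x s hx))).smul hq'c)))
    have hF'cont : ContinuousOn (fun pr : ℝ × ℝ => F' pr.1 pr.2)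
        ((Icc (-r) r) ×ˢ (univ : Set ℝ)) := by
      have hcne : ∀ pr : ℝ × ℝ, pr ∈ (Icc (-r) r) ×ˢ (univ : Set ℝ) →
          1 + pr.1 * η pr.2 ≠ 0 := by
        intro pr hpr
        exact ne_of_gt (hvpos pr.1 pr.2 (abs_le.2 ⟨hpr.1.1, hpr.1.2⟩))
      have hcOn : ContinuousOn (fun pr : ℝ × ℝ => 1 + pr.1 * η pr.2)
          ((Icc (-r) r) ×ˢ (univ : Set ℝ)) :=
        (continuous_const.add (continuous_fst.mul (hηc.comp continuous_snd))).continuousOn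
      have hinv := hcOn.inv₀ hcne
      have hvec : ContinuousOn (fun pr : ℝ × ℝ => (1 + pr.1 * η pr.2)⁻¹ • deriv q pr.2)
          ((Icc (-r) r) ×ˢ (univ : Set ℝ)) :=
        hinv.smul (hq'c.comp continuous_snd).continuousOn
      have hpair : ContinuousOn
          (fun pr : ℝ × ℝ => ((q pr.2 : EuclideanSpace ℝ (Fin n)),
            (1 + pr.1 * η pr.2)⁻¹ • deriv q pr.2))
          ((Icc (-r) r) ×ˢ (univ : Set ℝ)) :=
        ((hqc.comp continuous_snd).continuousOn).prodMk hvec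
      have hdiv : ContinuousOn (fun pr : ℝ × ℝ => -(η pr.2) / (1 + pr.1 * η pr.2) ^ 2)
          ((Icc (-r) r) ×ˢ (univ : Set ℝ)) :=
        ((hηc.comp continuous_snd).neg.continuousOn).div (hcOn.pow 2)
          (fun pr hpr => pow_ne_zero _ (hcne pr hpr))
      have hvec2 : ContinuousOn
          (fun pr : ℝ × ℝ => ((0 : EuclideanSpace ℝ (Fin n)),
            (-(η pr.2) / (1 + pr.1 * η pr.2) ^ 2) • deriv q pr.2))
          ((Icc (-r) r) ×ˢ (univ : Set ℝ)) :=
        continuousOn_const.prodMk (hdiv.smul (hq'c.comp continuous_snd).continuousOn)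
      rw [hF'def]
      exact (((hηc.comp continuous_snd).continuousOn).mul
          (hL.continuous.comp_continuousOn hpair)).add
        (hcOn.mul ((hDc.comp_continuousOn hpair).clm_apply hvec2))
    obtain ⟨B', hB'⟩ := ((isCompact_Icc (a := -r) (b := r)).prod
      (isCompact_Icc (a := a) (b := b))).exists_bound_of_continuousOn
      (hF'cont.mono (by intro pr hpr; exact ⟨hpr.1, trivial⟩))
    have hder : HasDerivAt (fun e => ∫ s in a..b, F e s) (∫ s in a..b, F' 0 s) 0 := by
      refine (intervalIntegral.hasDerivAt_integral_of_dominated_loc_of_deriv_le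
        (𝕜 := ℝ) (μ := MeasureTheory.volume) (F := F) (F' := F') (x₀ := 0)
        (bound := fun _ => B') (a := a) (b := b) (Metric.ball_mem_nhds 0 hr) ?_ ?_ ?_ ?_ ?_ ?_).2
      · rw [Metric.eventually_nhds_iff]
        refine ⟨r, hr, fun x hx => ?_⟩
        have hx' : |x| ≤ r := by
          rw [Real.dist_eq, sub_zero] at hx
          exact hx.le
        exact (hFcont x hx').aestronglyMeasurable
      · exact (hFcont 0 (by simp [hr.le])).intervalIntegrable _ _
      · have hc0 : ContinuousOn (fun s : ℝ => F' 0 s) univ := by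
          have hmap : MapsTo (fun s : ℝ => ((0 : ℝ), s)) univ
              ((Icc (-r) r) ×ˢ (univ : Set ℝ)) :=
            fun s _ => ⟨⟨neg_nonpos.mpr hr.le, hr.le⟩, trivial⟩
          exact hF'cont.comp ((continuous_const.prodMk continuous_id).continuousOn) hmap
        exact (continuousOn_univ.1 hc0).aestronglyMeasurable
      · apply MeasureTheory.ae_of_all
        intro t ht x hx
        rw [Real.norm_eq_abs]
        have h1 : x ∈ Icc (-r) r := by
          rw [Metric.mem_ball, Real.dist_eq, sub_zero] at hx
          exact ⟨by linarith [abs_le.1 hx.le], (abs_le.1 hx.le).2⟩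
        have h2 : t ∈ Icc a b := by
          rw [uIoc_of_le hab.le] at ht
          exact Ioc_subset_Icc_self ht
        have := hB' (x, t) ⟨h1, h2⟩
        rwa [Real.norm_eq_abs] at this
      · exact intervalIntegrable_const
      · apply MeasureTheory.ae_of_all
        intro t ht x hx
        apply hFd
        apply ne_of_gt
        apply hvpos
        rw [Metric.mem_ball, Real.dist_eq, sub_zero] at hx
        exact hx.le
    have hzero := hlm.hasDerivAt_eq_zero hder
    have hF'0 : ∀ s, F' 0 s = -(η s * En s) := by
      intro s
      have h1 : F' 0 s = η s * L (q s) (deriv q s)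
          + (D (q s, deriv q s)) (0, (-(η s)) • deriv q s) := by
        rw [hF'def]
        norm_num
        exact Or.inl rfl
      have h2 : ((0 : EuclideanSpace ℝ (Fin n)), (-(η s)) • deriv q s)
          = (-(η s)) • ((0 : EuclideanSpace ℝ (Fin n)), deriv q s) := by
        rw [Prod.smul_mk, smul_zero]
      rw [h1, h2, (D (q s, deriv q s)).map_smul, smul_eq_mul, key2, hEndef]
      ring
    have hfin : (∫ s in a..b, F' 0 s) = -(∫ s in a..b, η s * En s) := by
      rw [show (fun s => F' 0 s) = fun s => -(η s * En s) from funext hF'0]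
      exact intervalIntegral.integral_neg
    rw [hfin] at hzero
    linarith
  -- endgame
  have hsq : (∫ s in a..b, (En s - c) ^ 2) = 0 := by
    have h1 : (∫ s in a..b, (En s - c) * En s) = 0 := by
      rw [← hkey]
      apply intervalIntegral.integral_congr
      intro s hs
      show (En s - c) * En s = η s * En s
      rw [hηeq s (by rwa [uIcc_of_le hab.le] at hs)]
    have heq : ∀ s, (En s - c) ^ 2 = (En s - c) * En s - c * (En s - c) := by
      intro s; ring
    rw [show (fun s => (En s - c) ^ 2) = fun s => (En s - c) * En s - c * (En s - c)
      from funext heq]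
    rw [intervalIntegral.integral_sub (f := fun s => (En s - c) * En s) (g := fun s => c * (En s - c))
      (((hEnc.sub continuous_const).mul hEnc).intervalIntegrable _ _)
      ((continuous_const.mul (hEnc.sub continuous_const)).intervalIntegrable _ _),
      h1, intervalIntegral.integral_const_mul, hInc]
    ring
  intro u hu
  by_contra hne
  have hpos : 0 < ∫ s in a..b, (En s - c) ^ 2 := by
    apply intervalIntegral.integral_pos hab
    · exact ((hEnc.sub continuous_const).pow 2).continuousOn
    · intro x _; positivity
    · refine ⟨u, hu, ?_⟩
      have h5 : En u - c ≠ 0 := sub_ne_zero.mpr hne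
      positivity
  linarith [hsq, hpos]
end

section
/- Let L : ℝ × ℝⁿ × ℝⁿ → ℝ be C¹ and let q : [a,b] → ℝⁿ be a C¹ curve satisfying both the first Euler–Lagrange equation d/dt ∂₃L(t,q(t),q'(t)) = ∂₂L(t,q(t),q'(t)) and the second Euler–Lagrange equation d/dt[-L(t,q,q') + ∂₃L(t,q,q')·q'] = -∂₁L(t,q,q') on (a,b). Suppose τ : ℝ × ℝⁿ → ℝ and ξ : ℝ × ℝⁿ → ℝⁿ are C¹ and that the invariance identity ∂₁L·τ + ∂₂L·ξ + ∂₃L·(d/dt ξ(t,q(t))) + L·(d/dt τ(t,q(t))) - (∂₃L · q')·(d/dt τ(t,q(t))) = 0 holds along q (all partials of L evaluated at (t, q(t), q'(t))). Then the Noether quantity ∂₃L(t,q,q')·ξ(t,q(t)) + [L(t,q,q') - ∂₃L(t,q,q')·q'(t)]·τ(t,q(t)) is constant on [a,b]. -/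
open Set InnerProductSpace
open scoped RealInnerProductSpace

theorem noether_real (n : ℕ) (a b : ℝ) (hab : a < b)
    (L : ℝ → EuclideanSpace ℝ (Fin n) → EuclideanSpace ℝ (Fin n) → ℝ)
    (L1 : ℝ → EuclideanSpace ℝ (Fin n) → EuclideanSpace ℝ (Fin n) → ℝ)
    (L2 L3 : ℝ → EuclideanSpace ℝ (Fin n) → EuclideanSpace ℝ (Fin n) → EuclideanSpace ℝ (Fin n))
    (hL : ContDiff ℝ 1 (fun p : ℝ × EuclideanSpace ℝ (Fin n) × EuclideanSpace ℝ (Fin n) =>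
      L p.1 p.2.1 p.2.2))
    (hL1 : ∀ t u v, HasDerivAt (fun s => L s u v) (L1 t u v) t)
    (hL2 : ∀ t u v, HasGradientAt (fun u' => L t u' v) (L2 t u v) u)
    (hL3 : ∀ t u v, HasGradientAt (fun v' => L t u v') (L3 t u v) v)
    (q : ℝ → EuclideanSpace ℝ (Fin n)) (hq : ContDiff ℝ 1 q)
    (hEL1 : ∀ t ∈ Ioo a b,
      HasDerivAt (fun s => L3 s (q s) (deriv q s)) (L2 t (q t) (deriv q t)) t)
    (hEL2 : ∀ t ∈ Ioo a b,
      HasDerivAt (fun s => -L s (q s) (deriv q s) + ⟪L3 s (q s) (deriv q s), deriv q s⟫)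
        (-(L1 t (q t) (deriv q t))) t)
    (τ : ℝ → EuclideanSpace ℝ (Fin n) → ℝ) (ξ : ℝ → EuclideanSpace ℝ (Fin n) → EuclideanSpace ℝ (Fin n))
    (hτ : ContDiff ℝ 1 (fun p : ℝ × EuclideanSpace ℝ (Fin n) => τ p.1 p.2))
    (hξ : ContDiff ℝ 1 (fun p : ℝ × EuclideanSpace ℝ (Fin n) => ξ p.1 p.2))
    (hinv : ∀ t ∈ Ioo a b,
      L1 t (q t) (deriv q t) * τ t (q t)
      + ⟪L2 t (q t) (deriv q t), ξ t (q t)⟫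
      + ⟪L3 t (q t) (deriv q t), deriv (fun s => ξ s (q s)) t⟫
      + L t (q t) (deriv q t) * deriv (fun s => τ s (q s)) t
      - ⟪L3 t (q t) (deriv q t), deriv q t⟫ * deriv (fun s => τ s (q s)) t = 0) :
    ∀ s ∈ Icc a b, ∀ t ∈ Icc a b,
      ⟪L3 s (q s) (deriv q s), ξ s (q s)⟫
        + (L s (q s) (deriv q s) - ⟪L3 s (q s) (deriv q s), deriv q s⟫) * τ s (q s)
      = ⟪L3 t (q t) (deriv q t), ξ t (q t)⟫
        + (L t (q t) (deriv q t) - ⟪L3 t (q t) (deriv q t), deriv q t⟫) * τ t (q t) := by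
  have hqc : Continuous q := hq.continuous
  have hq' : Continuous (deriv q) := hq.continuous_deriv le_rfl
  have hcurve : Continuous fun s => (s, q s, deriv q s) :=
    continuous_id.prodMk (hqc.prodMk hq')
  set Lf : ℝ × EuclideanSpace ℝ (Fin n) × EuclideanSpace ℝ (Fin n) → ℝ :=
    fun p => L p.1 p.2.1 p.2.2 with hLfdef
  set j : EuclideanSpace ℝ (Fin n) →L[ℝ] ℝ × EuclideanSpace ℝ (Fin n) × EuclideanSpace ℝ (Fin n) :=
    ContinuousLinearMap.prod 0 (ContinuousLinearMap.prod 0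
      (ContinuousLinearMap.id ℝ (EuclideanSpace ℝ (Fin n)))) with hjdef
  -- L3 expressed via the full fderiv
  have hL3eq : ∀ p : ℝ × EuclideanSpace ℝ (Fin n) × EuclideanSpace ℝ (Fin n),
      L3 p.1 p.2.1 p.2.2
      = (toDual ℝ (EuclideanSpace ℝ (Fin n))).symm ((fderiv ℝ Lf p).comp j) := by
    rintro ⟨t, u, v⟩
    have h1 : HasFDerivAt (fun v' => L t u v')
        (toDual ℝ (EuclideanSpace ℝ (Fin n)) (L3 t u v)) v := (hL3 t u v).hasFDerivAt
    have h2 : HasFDerivAt (fun v' : EuclideanSpace ℝ (Fin n) => (t, u, v')) j v :=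
      HasFDerivAt.prodMk (hasFDerivAt_const t v) (HasFDerivAt.prodMk (hasFDerivAt_const u v) (hasFDerivAt_id v))
    have h3 : HasFDerivAt Lf (fderiv ℝ Lf (t, u, v)) (t, u, v) :=
      (hL.differentiable one_ne_zero (t, u, v)).hasFDerivAt
    have h4 : HasFDerivAt (fun v' => L t u v') ((fderiv ℝ Lf (t, u, v)).comp j) v :=
      HasFDerivAt.comp (g := Lf) (f := fun v' => (t, u, v')) v h3 h2
    have h5 := h1.unique h4
    simp [← h5]
  have hL3cont : Continuous fun s => L3 s (q s) (deriv q s) := by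
    have h3 : (fun s => L3 s (q s) (deriv q s))
        = fun s => (toDual ℝ (EuclideanSpace ℝ (Fin n))).symm
            ((fderiv ℝ Lf (s, q s, deriv q s)).comp j) :=
      funext fun s => hL3eq (s, q s, deriv q s)
    rw [h3]
    exact ((toDual ℝ (EuclideanSpace ℝ (Fin n))).symm.continuous).comp
      ((((hL.continuous_fderiv one_ne_zero).clm_comp (continuous_const (y := j)))).comp hcurve)
  have hLcont : Continuous fun s => L s (q s) (deriv q s) := hL.continuous.comp hcurve
  have hξq : Continuous fun s => ξ s (q s) :=
    hξ.continuous.comp (continuous_id.prodMk hqc)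
  have hτq : Continuous fun s => τ s (q s) :=
    hτ.continuous.comp (continuous_id.prodMk hqc)
  -- the Noether quantity
  set F : ℝ → ℝ := fun s => ⟪L3 s (q s) (deriv q s), ξ s (q s)⟫
      + (L s (q s) (deriv q s) - ⟪L3 s (q s) (deriv q s), deriv q s⟫) * τ s (q s) with hF
  have hFcont : Continuous F := by
    apply Continuous.add
    · exact hL3cont.inner hξq
    · exact (hLcont.sub (hL3cont.inner hq')).mul hτq
  -- zero derivative on Ioo
  have hF0 : ∀ t ∈ Ioo a b, HasDerivAt F 0 t := by
    intro t ht
    have hdξ : HasDerivAt (fun s => ξ s (q s)) (deriv (fun s => ξ s (q s)) t) t := by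
      have hd : DifferentiableAt ℝ (fun s => ξ s (q s)) t :=
        DifferentiableAt.comp (g := fun p : ℝ × EuclideanSpace ℝ (Fin n) => ξ p.1 p.2) t ((hξ.differentiable one_ne_zero) (t, q t))
          (differentiableAt_id.prodMk (hq.differentiable one_ne_zero t))
      exact hd.hasDerivAt
    have hdτ : HasDerivAt (fun s => τ s (q s)) (deriv (fun s => τ s (q s)) t) t := by
      have hd : DifferentiableAt ℝ (fun s => τ s (q s)) t :=
        DifferentiableAt.comp (g := fun p : ℝ × EuclideanSpace ℝ (Fin n) => τ p.1 p.2) t ((hτ.differentiable one_ne_zero) (t, q t))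
          (differentiableAt_id.prodMk (hq.differentiable one_ne_zero t))
      exact hd.hasDerivAt
    have hinner := (hEL1 t ht).inner ℝ hdξ
    have hE : HasDerivAt (fun s => L s (q s) (deriv q s) - ⟪L3 s (q s) (deriv q s), deriv q s⟫)
        (L1 t (q t) (deriv q t)) t := by
      have h := (hEL2 t ht).neg
      simpa only [Pi.neg_def, neg_add, neg_neg, ← sub_eq_add_neg] using h
    have hsum := hinner.add (hE.mul hdτ)
    have hz : ⟪L3 t (q t) (deriv q t), deriv (fun s => ξ s (q s)) t⟫
        + ⟪L2 t (q t) (deriv q t), ξ t (q t)⟫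
        + (L1 t (q t) (deriv q t) * τ t (q t)
          + (L t (q t) (deriv q t) - ⟪L3 t (q t) (deriv q t), deriv q t⟫)
            * deriv (fun s => τ s (q s)) t) = 0 := by
      linear_combination hinv t ht
    rw [hz] at hsum
    exact hsum
  -- constant on Ioo
  have hm : (a + b) / 2 ∈ Ioo a b := ⟨by linarith, by linarith⟩
  have key : ∀ x ∈ Ioo a b, F x = F ((a + b) / 2) := by
    intro x hx
    rcases le_total x ((a + b) / 2) with h | h
    · have hc := constant_of_has_deriv_right_zero (f := F) (a := x) (b := (a + b) / 2)
        hFcont.continuousOn (fun y hy => (hF0 y ⟨lt_of_lt_of_le hx.1 hy.1,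
          hy.2.trans hm.2⟩).hasDerivWithinAt)
      exact (hc ((a + b) / 2) (right_mem_Icc.2 h)).symm
    · exact constant_of_has_deriv_right_zero (f := F) (a := (a + b) / 2) (b := x)
        hFcont.continuousOn (fun y hy => (hF0 y ⟨lt_of_lt_of_le hm.1 hy.1,
          hy.2.trans hx.2⟩).hasDerivWithinAt) x (right_mem_Icc.2 h)
  -- extend to Icc by continuity
  have key2 : ∀ x ∈ Icc a b, F x = F ((a + b) / 2) := by
    have hEq0 : EqOn F (fun _ => F ((a + b) / 2)) (Ioo a b) := fun x hx => key x hx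
    have hEq := hEq0.closure hFcont continuous_const
    rw [closure_Ioo hab.ne] at hEq
    exact fun x hx => hEq hx
  intro s hs t ht
  exact (key2 s hs).trans (key2 t ht).symm
end
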